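/- Let G ⊆ ℝ be a finite nonempty set and let ∘ : G × G → G be a commutative binary operation on G (i.e., x₁ ∘ x₂ = x₂ ∘ x₁ for all x₁, x₂ ∈ G). Then there exist functions φ : G → ℝ³ and ψ : ℝ³ → G such that x₁ ∘ x₂ = ψ(φ(x₁) + φ(x₂)) for all x₁, x₂ ∈ G. -/
import Mathlib

/-- From equal first and second power sums, the unordered pairs agree. -/
lemma pair_eq_of_sums (a b c d : ℝ) (h1 : a + b = c + d) (h2 : a^2 + b^2 = c^2 + d^2) :
    (a = c ∧ b = d) ∨ (a = d ∧ b = c) := by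
  have key : (a - c) * (a - d) = 0 := by linear_combination (a - b - c - d) / 2 * h1 + h2 / 2
  rcases mul_eq_zero.mp key with h | h
  · left; constructor <;> linarith [sub_eq_zero.mp h]
  · right; constructor <;> linarith [sub_eq_zero.mp h]

/-- Every commutative binary operation on a finite nonempty set `G ⊆ ℝ` admits a
Kolmogorov–Arnold representation with embedding dimension `3`:
`x₁ ∘ x₂ = ψ (φ x₁ + φ x₂)`. -/
theorem ka_representation_commutative_binary_op (G : Set ℝ) (hG : G.Finite)
    (hne : G.Nonempty) (op : G → G → G)
    (hcomm : ∀ x₁ x₂ : G, op x₁ x₂ = op x₂ x₁) :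
    ∃ (φ : G → (Fin 3 → ℝ)) (ψ : (Fin 3 → ℝ) → G),
      ∀ x₁ x₂ : G, op x₁ x₂ = ψ (φ x₁ + φ x₂) := by
  classical
  obtain ⟨g0, hg0⟩ := hne
  set φ : G → (Fin 3 → ℝ) := fun x => ![(x : ℝ), (x : ℝ)^2, 0] with hφ
  set P : (Fin 3 → ℝ) → G × G → Prop :=
    fun v p => ((p.1 : ℝ) + (p.2 : ℝ) = v 0) ∧ ((p.1 : ℝ)^2 + (p.2 : ℝ)^2 = v 1) with hP
  refine ⟨φ, fun v => if h : ∃ p, P v p then op h.choose.1 h.choose.2 else ⟨g0, hg0⟩, ?_⟩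
  intro x₁ x₂
  have hex : ∃ p, P (φ x₁ + φ x₂) p := ⟨(x₁, x₂), by simp [hP, hφ]⟩
  simp only [dif_pos hex]
  obtain ⟨h1, h2⟩ := hex.choose_spec
  simp only [hφ, Pi.add_apply] at h1 h2
  norm_num at h1 h2
  rcases pair_eq_of_sums _ _ _ _ h1 h2 with ⟨e1, e2⟩ | ⟨e1, e2⟩
  · rw [show hex.choose.1 = x₁ from Subtype.ext e1, show hex.choose.2 = x₂ from Subtype.ext e2]
  · rw [show hex.choose.1 = x₂ from Subtype.ext e1, show hex.choose.2 = x₁ from Subtype.ext e2,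
      hcomm]
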